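/- (Two-step reformulation of M1.) Let B, E : ℂ³ → ℂ³ and F(x) = [[B̃(x), −iE(x)],[iE(x)ᵀ, 0]]. Let h ∈ ℝ and let (y_n, u_n), n ≥ 0, be generated by the M1 scheme y_{n+1} = y_n + h·exp((h/2)F(x_n))·u_n, u_{n+1} = exp((h/2)F(x_{n+1}))·exp((h/2)F(x_n))·u_n, with x_n the first three components of y_n. Then for all n ≥ 1: y_{n+1} − 2y_n + y_{n−1} = h·(exp((h/2)F(x_n)) − exp(−(h/2)F(x_n)))·u_n and y_{n+1} − y_{n−1} = h·(exp((h/2)F(x_n)) + exp(−(h/2)F(x_n)))·u_n. -/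

import Mathlib

open Matrix

/-- The 4×4 complex field matrix `F(x) = [[B̃(x), −iE(x)],[iE(x)ᵀ, 0]]`,
where `B̃(x)α = α × B(x)`, for complex field functions `B, E`. -/
noncomputable def FmatC (B E : (Fin 3 → ℂ) → (Fin 3 → ℂ)) (x : Fin 3 → ℂ) :
    Matrix (Fin 4) (Fin 4) ℂ :=
  !![0, B x 2, -B x 1, -Complex.I * E x 0;
     -B x 2, 0, B x 0, -Complex.I * E x 1;
     B x 1, -B x 0, 0, -Complex.I * E x 2;
     Complex.I * E x 0, Complex.I * E x 1, Complex.I * E x 2, 0]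


/-- The spatial part (first three components) of a 4-vector. -/
def spatial (y : Fin 4 → ℂ) : Fin 3 → ℂ := fun i => y i.castSucc

lemma exp_neg_mulVec_exp_mulVec (A : Matrix (Fin 4) (Fin 4) ℂ) (v : Fin 4 → ℂ) :
    NormedSpace.exp (-A) *ᵥ (NormedSpace.exp A *ᵥ v) = v := by
  rw [mulVec_mulVec]
  have h1 : NormedSpace.exp (-A) * NormedSpace.exp A = 1 := by
    rw [← Matrix.exp_add_of_commute (-A) A ((Commute.refl A).neg_left), neg_add_cancel,
      NormedSpace.exp_zero]
  rw [h1, one_mulVec]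

/-- Two-step reformulation of M1:
`y_{n+1} − 2y_n + y_{n−1} = h(exp((h/2)F(x_n)) − exp(−(h/2)F(x_n)))u_n` and
`y_{n+1} − y_{n−1} = h(exp((h/2)F(x_n)) + exp(−(h/2)F(x_n)))u_n`. -/
theorem M1_two_step_form (B E : (Fin 3 → ℂ) → (Fin 3 → ℂ)) (h : ℝ)
    (y u : ℕ → Fin 4 → ℂ)
    (hy : ∀ n, y (n + 1) = y n + (h : ℂ) •
      (NormedSpace.exp (((h : ℂ) / 2) • FmatC B E (spatial (y n))) *ᵥ u n))
    (hu : ∀ n, u (n + 1) =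
      NormedSpace.exp (((h : ℂ) / 2) • FmatC B E (spatial (y (n + 1)))) *ᵥ
        (NormedSpace.exp (((h : ℂ) / 2) • FmatC B E (spatial (y n))) *ᵥ u n)) :
    ∀ n, 1 ≤ n →
      (y (n + 1) - (2 : ℂ) • y n + y (n - 1) = (h : ℂ) •
        ((NormedSpace.exp (((h : ℂ) / 2) • FmatC B E (spatial (y n))) -
          NormedSpace.exp (-((h : ℂ) / 2) • FmatC B E (spatial (y n)))) *ᵥ u n)) ∧
      (y (n + 1) - y (n - 1) = (h : ℂ) •
        ((NormedSpace.exp (((h : ℂ) / 2) • FmatC B E (spatial (y n))) +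
          NormedSpace.exp (-((h : ℂ) / 2) • FmatC B E (spatial (y n)))) *ᵥ u n)) := by
  rintro n hn
  obtain ⟨m, rfl⟩ := Nat.exists_eq_add_of_le hn
  simp only [add_comm 1 m, Nat.add_sub_cancel]
  have h1 := hy (m + 1)
  have h2 : y m = y (m + 1) - (h : ℂ) •
      (NormedSpace.exp (-((h : ℂ) / 2) • FmatC B E (spatial (y (m + 1)))) *ᵥ u (m + 1)) := by
    rw [hu m, neg_smul, exp_neg_mulVec_exp_mulVec, hy m]
    abel
  constructor
  · rw [h1, h2, sub_mulVec, smul_sub]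
    module
  · rw [h1, h2, add_mulVec, smul_add]
    module
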